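/- Let 1 ≤ q ≤ p < ∞ and Ξ(z) = e^{z^p} - 1. Then L^q(ℝ^N) ∩ L^∞(ℝ^N) embeds into the Orlicz space L^Ξ(ℝ^N), and for any φ ∈ L^q(ℝ^N) ∩ L^∞(ℝ^N), ‖φ‖_Ξ ≤ (log 2)^{-1/p} (‖φ‖_{L^q} + ‖φ‖_{L^∞}). -/

import Mathlib

open MeasureTheory

/-- Membership in the Orlicz space `L^Ξ(ℝ^N)` with `Ξ(z) = e^{|z|^p} - 1`. -/
def InOrlicz (N : ℕ) (p : ℝ) (φ : EuclideanSpace ℝ (Fin N) → ℝ) : Prop :=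
  ∃ κ : ℝ, 0 < κ ∧ Integrable (fun x => Real.exp ((|φ x| / κ) ^ p) - 1) volume

/-- The Luxemburg norm on the Orlicz space with `Ξ(z) = e^{|z|^p} - 1`. -/
noncomputable def luxNorm (N : ℕ) (p : ℝ) (φ : EuclideanSpace ℝ (Fin N) → ℝ) : ℝ :=
  sInf {κ : ℝ | 0 < κ ∧ Integrable (fun x => Real.exp ((|φ x| / κ) ^ p) - 1) volume ∧
    (∫ x, (Real.exp ((|φ x| / κ) ^ p) - 1)) ≤ 1}

/-- convexity bound : `2^s ≤ 1 + s` on `[0,1]`. -/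
lemma exp_log_two_mul_le {s : ℝ} (h0 : 0 ≤ s) (h1 : s ≤ 1) :
    Real.exp (Real.log 2 * s) ≤ 1 + s := by
  have h := convexOn_exp.2 (Set.mem_univ (0:ℝ)) (Set.mem_univ (Real.log 2))
    (by linarith : (0:ℝ) ≤ 1 - s) h0 (by ring)
  simp only [smul_eq_mul, mul_zero, zero_add, Real.exp_zero, mul_one] at h
  rw [Real.exp_log (by norm_num)] at h
  rw [mul_comm]
  linarith

theorem Lq_inter_Linfty_embeds_orlicz (N : ℕ) (p q : ℝ) (hq : 1 ≤ q) (hqp : q ≤ p)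
    (φ : EuclideanSpace ℝ (Fin N) → ℝ)
    (hφq : MemLp φ (ENNReal.ofReal q) volume) (hphitop : MemLp φ ⊤ volume) :
    InOrlicz N p φ ∧
      luxNorm N p φ ≤ (Real.log 2) ^ (-(1 / p)) *
        ((eLpNorm φ (ENNReal.ofReal q) volume).toReal + (eLpNorm φ ⊤ volume).toReal) := by
  have hp0 : (0:ℝ) < p := by linarith
  have hq0 : (0:ℝ) < q := by linarith
  have hlog2 : (0:ℝ) < Real.log 2 := Real.log_pos (by norm_num)
  set c : ℝ := (Real.log 2) ^ (-(1/p)) with hc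
  have hcpos : 0 < c := Real.rpow_pos_of_pos hlog2 _
  set A := (eLpNorm φ (ENNReal.ofReal q) volume).toReal with hA
  set B := (eLpNorm φ ⊤ volume).toReal with hB
  have hA0 : 0 ≤ A := ENNReal.toReal_nonneg
  have hB0 : 0 ≤ B := ENNReal.toReal_nonneg
  have hmeas : AEStronglyMeasurable φ volume := hphitop.1
  have hbdd : BddBelow {κ : ℝ | 0 < κ ∧
      Integrable (fun x => Real.exp ((|φ x| / κ) ^ p) - 1) volume ∧
      (∫ x, (Real.exp ((|φ x| / κ) ^ p) - 1)) ≤ 1} := ⟨0, fun x hx => hx.1.le⟩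
  by_cases hM : A + B = 0
  · -- degenerate case : φ = 0 a.e.
    have hB0' : B = 0 := by linarith
    have hBeq : eLpNorm φ ⊤ volume = 0 := by
      have hfin : eLpNorm φ ⊤ volume ≠ ⊤ := hphitop.2.ne
      rcases (ENNReal.toReal_eq_zero_iff _).mp hB0' with h | h
      · exact h
      · exact absurd h hfin
    have hzero : φ =ᵐ[volume] 0 := (eLpNorm_eq_zero_iff hmeas (by simp)).mp hBeq
    have key : ∀ κ : ℝ, (fun x => Real.exp ((|φ x| / κ) ^ p) - 1) =ᵐ[volume] 0 := by
      intro κ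
      filter_upwards [hzero] with x hx
      simp only [Pi.zero_apply] at hx ⊢
      simp [hx, Real.zero_rpow hp0.ne']
    have hmem : ∀ κ : ℝ, 0 < κ → κ ∈ {κ : ℝ | 0 < κ ∧
        Integrable (fun x => Real.exp ((|φ x| / κ) ^ p) - 1) volume ∧
        (∫ x, (Real.exp ((|φ x| / κ) ^ p) - 1)) ≤ 1} := by
      intro κ hκ
      refine ⟨hκ, (integrable_zero _ _ _).congr (key κ).symm, ?_⟩
      rw [integral_congr_ae (key κ)]
      simp
    refine ⟨⟨1, one_pos, (hmem 1 one_pos).2.1⟩, ?_⟩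
    rw [hM, mul_zero]
    unfold luxNorm
    refine le_of_forall_pos_le_add fun ε hε => ?_
    rw [zero_add]
    exact csInf_le hbdd (hmem ε hε)
  · -- main case
    set M := A + B with hMdef
    have hMpos : 0 < M := lt_of_le_of_ne (by positivity) (Ne.symm hM)
    set κ := c * M with hκdef
    have hκ : 0 < κ := mul_pos hcpos hMpos
    -- κ ^ p = (log 2)⁻¹ * M ^ p
    have hκp : κ ^ p = (Real.log 2)⁻¹ * M ^ p := by
      rw [hκdef, Real.mul_rpow hcpos.le hMpos.le, hc, ← Real.rpow_mul hlog2.le]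
      have : -(1/p) * p = -1 := by field_simp
      rw [this, Real.rpow_neg_one]
    -- a.e. bound |φ x| ≤ B
    have hle : ∀ᵐ x ∂(volume : Measure (EuclideanSpace ℝ (Fin N))), |φ x| ≤ B := by
      filter_upwards [ae_le_eLpNormEssSup (f := φ) (μ := volume)] with x hx
      have hB' : ((‖φ x‖₊ : ENNReal)).toReal ≤ B := by
        rw [hB, eLpNorm_exponent_top]
        exact ENNReal.toReal_mono
          (by rw [← eLpNorm_exponent_top]; exact hphitop.2.ne) hx
      simpa [Real.norm_eq_abs] using hB'
    -- integral identity for the Lq norm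
    have hq_ne : ENNReal.ofReal q ≠ 0 := by
      simpa [ENNReal.ofReal_eq_zero, not_le] using hq0
    have hq_top : ENNReal.ofReal q ≠ ⊤ := ENNReal.ofReal_ne_top
    have htoReal : (ENNReal.ofReal q).toReal = q := ENNReal.toReal_ofReal hq0.le
    have hint_q : Integrable (fun x => ‖φ x‖ ^ q) volume := by
      have h := hφq.integrable_norm_rpow hq_ne hq_top
      rwa [htoReal] at h
    have hInonneg : 0 ≤ ∫ x, ‖φ x‖ ^ q := integral_nonneg fun x => by positivity
    have hIq : (∫ x, ‖φ x‖ ^ q) = A ^ q := by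
      have h := hφq.eLpNorm_eq_integral_rpow_norm hq_ne hq_top
      rw [htoReal] at h
      have hAeq : A = ((∫ x, ‖φ x‖ ^ q) ^ q⁻¹) := by
        rw [hA, h, ENNReal.toReal_ofReal (by positivity)]
      rw [hAeq, ← Real.rpow_mul hInonneg, inv_mul_cancel₀ hq0.ne', Real.rpow_one]
    -- pointwise a.e. bound
    have hptwise : ∀ᵐ x ∂(volume : Measure (EuclideanSpace ℝ (Fin N))),
        0 ≤ Real.exp ((|φ x| / κ) ^ p) - 1 ∧
        Real.exp ((|φ x| / κ) ^ p) - 1 ≤ (|φ x| / M) ^ q := by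
      filter_upwards [hle] with x hx
      set u := |φ x| / M with hu
      have hu0 : 0 ≤ u := by positivity
      have hu1 : u ≤ 1 := by
        rw [hu, div_le_one hMpos]
        linarith
      have ht : (|φ x| / κ) ^ p = Real.log 2 * u ^ p := by
        rw [Real.div_rpow (abs_nonneg _) hκ.le, hκp, hu,
          Real.div_rpow (abs_nonneg _) hMpos.le]
        field_simp
      constructor
      · rw [sub_nonneg]
        exact Real.one_le_exp (Real.rpow_nonneg (by positivity) _)
      · rw [ht]
        have hup : u ^ p ≤ u ^ q := by
          rcases eq_or_lt_of_le hu0 with h | h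
          · rw [← h]
            simp [Real.zero_rpow hp0.ne', Real.zero_rpow hq0.ne']
          · exact Real.rpow_le_rpow_of_exponent_ge h hu1 hqp
        have hsq1 : u ^ q ≤ 1 := Real.rpow_le_one hu0 hu1 hq0.le
        have hsq0 : 0 ≤ u ^ q := Real.rpow_nonneg hu0 _
        have h1 : Real.exp (Real.log 2 * u ^ p) ≤ Real.exp (Real.log 2 * u ^ q) :=
          Real.exp_le_exp.2 (mul_le_mul_of_nonneg_left hup hlog2.le)
        have h2 := exp_log_two_mul_le hsq0 hsq1
        linarith
    -- the dominating function is integrable, with integral ≤ 1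
    have hdiv : ∀ x : EuclideanSpace ℝ (Fin N), (|φ x| / M) ^ q = ‖φ x‖ ^ q / M ^ q :=
      fun x => by rw [Real.div_rpow (abs_nonneg _) hMpos.le, Real.norm_eq_abs]
    have hg : Integrable (fun x => (|φ x| / M) ^ q) volume := by
      simp only [hdiv]
      exact hint_q.div_const _
    have hgint : ∫ x, (|φ x| / M) ^ q ≤ 1 := by
      simp only [hdiv, integral_div, hIq]
      rw [div_le_one (by positivity)]
      exact Real.rpow_le_rpow hA0 (by linarith) hq0.le
    -- measurability of the integrand
    have hfmeas : AEStronglyMeasurable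
        (fun x => Real.exp ((|φ x| / κ) ^ p) - 1) volume := by
      refine AEStronglyMeasurable.sub ?_ aestronglyMeasurable_const
      have hcont : Continuous (fun t : ℝ => Real.exp (t ^ p)) :=
        Real.continuous_exp.comp (Real.continuous_rpow_const hp0.le)
      exact (hcont.measurable.comp_aemeasurable
        ((measurable_abs.comp_aemeasurable hmeas.aemeasurable).div_const κ)).aestronglyMeasurable
    have hfint : Integrable (fun x => Real.exp ((|φ x| / κ) ^ p) - 1) volume := by
      refine hg.mono' hfmeas ?_
      filter_upwards [hptwise] with x hx
      rw [Real.norm_eq_abs, abs_of_nonneg hx.1]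
      exact hx.2
    have hfle : (∫ x, (Real.exp ((|φ x| / κ) ^ p) - 1)) ≤ 1 :=
      le_trans (integral_mono_ae hfint hg (hptwise.mono fun x hx => hx.2)) hgint
    refine ⟨⟨κ, hκ, hfint⟩, ?_⟩
    unfold luxNorm
    exact csInf_le hbdd ⟨hκ, hfint, hfle⟩
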